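/- Let n, m be positive integers and let H : ℕ × ℕ → ℕ be defined by H(i,j) = C(i-1+n, n-1) · C(j-1+m, m-1). Then H is a fractal function, and for each (i,j) the only Ferrers matrix of size (C(i-1+n,n-1), C(j-1+m,m-1)) satisfying the defining conditions is the all-ones matrix. -/

import Mathlib

/-! ### Fractal functions (combinatorial side) -/

/-- The expansion `[σ]` of a finite sequence of positive integers:
`[σ] = [s_1] ⌢ … ⌢ [s_k]` where `[a] = (1,…,a)`; `[n]^d = expand^[d] [n]`. -/
def expand (σ : List ℕ) : List ℕ := (σ.map fun a => List.range' 1 a).flatten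

/-- A matrix with `{0,1}` entries is encoded as a list of rows of Booleans;
`ent M r c` is the entry at (0-based) position `(r,c)` (`false` outside the matrix). -/
def ent (M : List (List Bool)) (r c : ℕ) : Bool := (M.getD r []).getD c false

/-- A Ferrers matrix: if the entry at `(r,c)` is `1` then so is the entry at every
position `(r',c') ≤ (r,c)`. -/
def IsFerrers (M : List (List Bool)) : Prop :=
  ∀ r c r' c' : ℕ, r' ≤ r → c' ≤ c → ent M r c = true → ent M r' c' = true

/-- `M` has `a` rows and `b` columns. -/
def sizeIs (M : List (List Bool)) (a b : ℕ) : Prop :=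
  M.length = a ∧ ∀ row ∈ M, row.length = b

/-- The sum of the entries of `M` (number of `1` entries). -/
def matSum (M : List (List Bool)) : ℕ := (M.map fun row => row.count true).sum

/-- The row expansion `M^{⟨v,•⟩}`: the `i`-th row of `M` is repeated `v_i` times. -/
def rowExp (M : List (List Bool)) (v : List ℕ) : List (List Bool) :=
  (List.zipWith (fun vi row => List.replicate vi row) v M).flatten

/-- The column expansion `M^{⟨•,w⟩}`: the `j`-th column of `M` is repeated `w_j`
times. -/
def colExp (M : List (List Bool)) (w : List ℕ) : List (List Bool) :=
  M.map fun row => (List.zipWith (fun wj x => List.replicate wj x) w row).flatten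

/-- Entrywise `≤` of `{0,1}`-matrices. -/
def matLE (M N : List (List Bool)) : Prop :=
  ∀ r c : ℕ, ent M r c = true → ent N r c = true

/-- A family of matrices `(M_{ij})` witnessing that `H` is a fractal function:
each `M_{ij}` is a Ferrers matrix of size `(C(n+i-1, n-1), C(m+j-1, m-1))` whose
entries sum to `H i j`, with `M_{ij} ≤ M_{i-1,j}^{⟨[n]^{i-1},•⟩}` when `i > 0` and
`M_{ij} ≤ M_{i,j-1}^{⟨•,[m]^{j-1}⟩}` when `j > 0`. -/
def FractalWitness (n m : ℕ) (H : ℕ → ℕ → ℕ) (Mat : ℕ → ℕ → List (List Bool)) : Prop :=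
  ∀ i j : ℕ,
    IsFerrers (Mat i j) ∧
    sizeIs (Mat i j) ((n + i - 1).choose (n - 1)) ((m + j - 1).choose (m - 1)) ∧
    matSum (Mat i j) = H i j ∧
    (∀ i' : ℕ, i = i' + 1 → matLE (Mat i j) (rowExp (Mat i' j) (expand^[i'] [n]))) ∧
    (∀ j' : ℕ, j = j' + 1 → matLE (Mat i j) (colExp (Mat i j') (expand^[j'] [m])))

/-- `H : ℕ² → ℕ` is a fractal function (Definition 4.7). -/
def IsFractalFunction (n m : ℕ) (H : ℕ → ℕ → ℕ) : Prop :=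
  H 0 0 = 1 ∧ ∃ Mat : ℕ → ℕ → List (List Bool), FractalWitness n m H Mat



/-! ### Auxiliary lemmas -/

lemma expand_append (σ τ : List ℕ) : expand (σ ++ τ) = expand σ ++ expand τ := by
  simp [expand]

lemma expand_iter_append (d : ℕ) (σ τ : List ℕ) :
    expand^[d] (σ ++ τ) = expand^[d] σ ++ expand^[d] τ := by
  induction d generalizing σ τ with
  | zero => rfl
  | succ d ih => rw [Function.iterate_succ_apply, Function.iterate_succ_apply,
      Function.iterate_succ_apply, expand_append, ih]

lemma expand_singleton (k : ℕ) : expand [k] = List.range' 1 k := by simp [expand]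

lemma expand_iter_nil (d : ℕ) : expand^[d] [] = [] := by
  induction d with
  | zero => rfl
  | succ d ih => rw [Function.iterate_succ_apply, show expand [] = [] from rfl, ih]

lemma length_expand (σ : List ℕ) : (expand σ).length = σ.sum := by
  rw [expand, List.length_flatten, List.map_map]
  congr 1
  simp [Function.comp_def]

lemma len_iter : ∀ d n : ℕ, (expand^[d] [n+1]).length = (n+d).choose d := by
  intro d
  induction d with
  | zero => intro n; simp
  | succ d ih =>
    have hB : ∀ k : ℕ, (expand^[d] (List.range' 1 k)).length = (k+d).choose (d+1) := by
      intro k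
      induction k with
      | zero => simp [expand_iter_nil, Nat.choose_eq_zero_of_lt]
      | succ k ihk =>
        have h0 : List.range' 1 (k+1) = List.range' 1 k ++ [k+1] := by
          simpa [Nat.add_comm] using List.range'_concat (step := 1) (s := 1) (n := k)
        rw [h0, expand_iter_append, List.length_append, ihk, ih k,
          show k+1+d = (k+d)+1 by omega, Nat.choose_succ_succ (k+d) d]
        exact Nat.add_comm _ _
    intro n
    rw [Function.iterate_succ_apply, expand_singleton, hB]
    congr 1; omega

lemma expand_len (n d : ℕ) (hn : 0 < n) :
    (expand^[d] [n]).length = (n + d - 1).choose (n-1) := by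
  obtain ⟨n', rfl⟩ : ∃ n', n = n' + 1 := ⟨n - 1, by omega⟩
  rw [len_iter, show n' + 1 + d - 1 = n' + d by omega, show n' + 1 - 1 = n' from rfl]
  have h := Nat.choose_symm (show d ≤ n' + d by omega)
  rw [Nat.add_sub_cancel] at h
  exact h.symm

lemma expand_sum (n d : ℕ) (hn : 0 < n) :
    (expand^[d] [n]).sum = (n + d).choose (n-1) := by
  have h := expand_len n (d+1) hn
  rw [Function.iterate_succ_apply', length_expand,
    show n + (d+1) - 1 = n + d by omega] at h
  exact h

lemma zip_rep {α : Type*} (v : List ℕ) (x : α) :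
    (List.zipWith (fun k y => List.replicate k y) v (List.replicate v.length x)).flatten
      = List.replicate v.sum x := by
  induction v with
  | nil => rfl
  | cons k v ih =>
    simp only [List.length_cons, List.replicate_succ, List.zipWith_cons_cons,
      List.flatten_cons, ih, List.sum_cons, List.replicate_add]

lemma rowExp_ones (v : List ℕ) (x : List Bool) :
    rowExp (List.replicate v.length x) v = List.replicate v.sum x := zip_rep v x

lemma colExp_ones (a : ℕ) (w : List ℕ) :
    colExp (List.replicate a (List.replicate w.length true)) w
      = List.replicate a (List.replicate w.sum true) := by
  rw [colExp, List.map_replicate, zip_rep]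

lemma getD_replicate_lt {α : Type*} (a : ℕ) (x d : α) (r : ℕ) (h : r < a) :
    (List.replicate a x).getD r d = x := by
  rw [List.getD_eq_getElem?_getD,
    List.getElem?_eq_getElem (by simpa using h : r < (List.replicate a x).length)]
  simp

lemma getD_of_le {α : Type*} (l : List α) (d : α) (r : ℕ) (h : l.length ≤ r) :
    l.getD r d = d := by
  rw [List.getD_eq_getElem?_getD, List.getElem?_eq_none (by simpa using h)]
  rfl

lemma ent_ones_iff (a b r c : ℕ) :
    ent (List.replicate a (List.replicate b true)) r c = true ↔ r < a ∧ c < b := by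
  unfold ent
  rcases lt_or_ge r a with hr | hr
  · rw [getD_replicate_lt a _ _ r hr]
    rcases lt_or_ge c b with hc | hc
    · rw [getD_replicate_lt b _ _ c hc]
      simp [hr, hc]
    · rw [getD_of_le _ _ _ (by simpa using hc)]
      simp; omega
  · rw [getD_of_le (List.replicate a (List.replicate b true)) [] r (by simpa using hr)]
    simp; omega

lemma matSum_ones (a b : ℕ) :
    matSum (List.replicate a (List.replicate b true)) = a * b := by
  simp [matSum, List.map_replicate, List.sum_replicate, List.count_replicate, smul_eq_mul]

lemma sum_eq_forall (b : ℕ) : ∀ (l : List ℕ), (∀ x ∈ l, x ≤ b) → l.sum = l.length * b →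
    ∀ x ∈ l, x = b := by
  intro l
  induction l with
  | nil => simp
  | cons y l ih =>
    intro h hs
    have h1 : l.sum ≤ l.length * b := by
      simpa [smul_eq_mul] using List.sum_le_card_nsmul l b (fun z hz => h z (.tail _ hz))
    have hy : y ≤ b := h y (.head l)
    simp only [List.sum_cons, List.length_cons, Nat.succ_mul] at hs
    have hyb : y = b := by omega
    have hls : l.sum = l.length * b := by omega
    intro x hx
    rcases List.mem_cons.1 hx with rfl | hx
    · exact hyb
    · exact ih (fun z hz => h z (.tail _ hz)) hls x hx

lemma rows_full (M : List (List Bool)) (a b : ℕ) (hs : sizeIs M a b)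
    (hsum : matSum M = a * b) : M = List.replicate a (List.replicate b true) := by
  obtain ⟨hlen, hrow⟩ := hs
  rw [List.eq_replicate_iff]
  refine ⟨hlen, fun row hr => ?_⟩
  have hall : ∀ x ∈ M.map (fun row => row.count true), x = b := by
    apply sum_eq_forall
    · rintro x hx
      obtain ⟨row, hrm, rfl⟩ := List.mem_map.1 hx
      calc row.count true ≤ row.length := List.count_le_length
        _ = b := hrow row hrm
    · rw [← matSum, hsum, List.length_map, hlen]
  have hc : row.count true = b := hall _ (List.mem_map.2 ⟨row, hr, rfl⟩)
  rw [List.eq_replicate_iff]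
  refine ⟨hrow row hr, fun x hx => ?_⟩
  have := (List.count_eq_length).1 (by rw [hc, hrow row hr])
  exact (this x hx).symm

/-- Remark 4.8: the numerical function `H(i,j) = C(i-1+n, n-1) · C(j-1+m, m-1)` is a
fractal function, and for each `(i,j)` the only Ferrers matrix of size
`(C(i-1+n, n-1), C(j-1+m, m-1))` satisfying the defining conditions is the matrix all
of whose entries are `1`: any family of matrices witnessing the conditions of the
definition consists of all-ones matrices. -/
theorem product_binomial_is_fractal_function (n m : ℕ) (hn : 0 < n) (hm : 0 < m) :
    IsFractalFunction n m
      (fun i j => (n + i - 1).choose (n - 1) * (m + j - 1).choose (m - 1)) ∧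
    ∀ Mat : ℕ → ℕ → List (List Bool),
      FractalWitness n m
        (fun i j => (n + i - 1).choose (n - 1) * (m + j - 1).choose (m - 1)) Mat →
      ∀ i j : ℕ, Mat i j =
        List.replicate ((n + i - 1).choose (n - 1))
          (List.replicate ((m + j - 1).choose (m - 1)) true) := by
  constructor
  · refine ⟨by simp, fun i j =>
      List.replicate ((n+i-1).choose (n-1)) (List.replicate ((m+j-1).choose (m-1)) true),
      fun i j => ?_⟩
    refine ⟨?_, ⟨by simp, fun row hr => by rw [List.eq_of_mem_replicate hr]; simp⟩,
      matSum_ones _ _, ?_, ?_⟩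
    · intro r c r' c' hr hc h
      rw [ent_ones_iff] at h ⊢
      omega
    · rintro i' rfl
      have hl := expand_len n i' hn
      have hs := expand_sum n i' hn
      beta_reduce
      rw [show (n + (i'+1) - 1) = n + i' by omega, ← hs, ← hl, rowExp_ones]
      exact fun r c h => h
    · rintro j' rfl
      have hl := expand_len m j' hm
      have hs := expand_sum m j' hm
      beta_reduce
      rw [show (m + (j'+1) - 1) = m + j' by omega, ← hs, ← hl, colExp_ones]
      exact fun r c h => h
  · intro Mat hW i j
    obtain ⟨-, hsize, hsum, -, -⟩ := hW i j
    exact rows_full _ _ _ hsize hsum
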